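/- Let σ_1, …, σ_k be a normalized rank-1 POVM on ℂ^d and let ρ be a density matrix with eigenvalues λ_1, …, λ_d (listed with multiplicity). Then Σ_{i=1}^d η(λ_i) + ln(k/d) ≤ Σ_{j=1}^k η((d/k)·Re tr(σ_j ρ)); that is, the entropy of measurement is bounded below by the von Neumann entropy of ρ plus ln(k/d). -/

import Mathlib

open scoped ComplexOrder

/-- For a normalized rank-1 POVM on `ℂ^d` and a density matrix `ρ`, the entropy of
measurement is bounded below by the von Neumann entropy of `ρ` plus `ln(k/d)`. -/
theorem stmt_8 {d k : ℕ} (hd : 0 < d) (hk : 0 < k)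
    (σ : Fin k → Matrix (Fin d) (Fin d) ℂ)
    (hherm : ∀ j, (σ j).IsHermitian)
    (hproj : ∀ j, σ j * σ j = σ j)
    (htr : ∀ j, (σ j).trace = 1)
    (hsum : ∑ j, σ j = ((k : ℂ) / (d : ℂ)) • 1)
    (ρ : Matrix (Fin d) (Fin d) ℂ)
    (hρ : ρ.PosSemidef) (hρtr : ρ.trace = 1) :
    ∑ i, Real.negMulLog (hρ.1.eigenvalues i) + Real.log ((k : ℝ) / d) ≤
      ∑ j, Real.negMulLog (((d : ℝ) / k) * ((σ j * ρ).trace).re) := by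
  have hdr : (0:ℝ) < d := by exact_mod_cast hd
  have hkr : (0:ℝ) < k := by exact_mod_cast hk
  set U : Matrix (Fin d) (Fin d) ℂ := (hρ.1.eigenvectorUnitary : Matrix (Fin d) (Fin d) ℂ) with hU
  set lam : Fin d → ℝ := hρ.1.eigenvalues with hlam
  have hUu : U * star U = 1 := (Unitary.mem_iff.mp hρ.1.eigenvectorUnitary.2).2
  have hUu' : star U * U = 1 := (Unitary.mem_iff.mp hρ.1.eigenvectorUnitary.2).1
  -- σ j is PSD
  have hσpsd : ∀ j, (σ j).PosSemidef := by
    intro j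
    have := Matrix.posSemidef_conjTranspose_mul_self (σ j)
    rwa [(hherm j).eq, hproj j] at this
  set M : Fin k → Matrix (Fin d) (Fin d) ℂ := fun j => star U * σ j * U with hM
  have hMpsd : ∀ j, (M j).PosSemidef := by
    intro j
    simpa [hM, Matrix.star_eq_conjTranspose] using (hσpsd j).conjTranspose_mul_mul_same U
  have hdiag : ∀ j i, 0 ≤ (M j) i i := by
    intro j i
    exact (hMpsd j).diag_nonneg
  set c : Fin k → Fin d → ℝ := fun j i => ((M j) i i).re with hc
  have hc0 : ∀ j i, 0 ≤ c j i := fun j i => by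
    have := hdiag j i
    exact (Complex.le_def.mp this).1
  have hentry : ∀ j i, (M j) i i = (c j i : ℂ) := by
    intro j i
    have h := hdiag j i
    have him : ((M j) i i).im = 0 := by
      have := (Complex.le_def.mp h).2; simpa using this.symm
    exact Complex.ext rfl (by simpa using him)
  -- spectral decomposition
  have hspec : ρ = U * Matrix.diagonal (fun i => (lam i : ℂ)) * star U := by
    exact hρ.1.spectral_theorem
  -- trace computation
  have htrace : ∀ j, (σ j * ρ).trace = ∑ i, (c j i : ℂ) * (lam i : ℂ) := by
    intro j
    conv_lhs => rw [hspec]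
    rw [show σ j * (U * Matrix.diagonal (fun i => (lam i : ℂ)) * star U)
        = (σ j * U * Matrix.diagonal (fun i => (lam i : ℂ))) * star U by
          simp [Matrix.mul_assoc],
      Matrix.trace_mul_comm, ← Matrix.mul_assoc, ← Matrix.mul_assoc]
    have : star U * σ j * U * Matrix.diagonal (fun i => (lam i : ℂ)) =
        M j * Matrix.diagonal (fun i => (lam i : ℂ)) := rfl
    rw [this, Matrix.trace]
    simp only [Matrix.diag, Matrix.mul_diagonal]
    exact Finset.sum_congr rfl fun i _ => by rw [hentry j i]
  have hq : ∀ j, ((σ j * ρ).trace).re = ∑ i, c j i * lam i := by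
    intro j
    rw [htrace j]
    push_cast
    rw [Complex.re_sum]
    push_cast
    simp
  -- row sums
  have hc1 : ∀ j, ∑ i, c j i = 1 := by
    intro j
    have hM1 : (M j).trace = 1 := by
      rw [hM]
      rw [Matrix.trace_mul_comm, ← Matrix.mul_assoc, hUu, Matrix.one_mul, htr j]
    have : ((M j).trace).re = 1 := by rw [hM1]; simp
    rw [Matrix.trace, Complex.re_sum] at this
    simpa [Matrix.diag, hc] using this
  -- column sums
  have hck : ∀ i, ∑ j, c j i = (k:ℝ) / d := by
    intro i
    have hMsum : ∑ j, M j = ((k : ℂ) / (d : ℂ)) • 1 := by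
      have : ∑ j, M j = star U * (∑ j, σ j) * U := by
        simp [hM, Finset.mul_sum, Finset.sum_mul]
      rw [this, hsum, Matrix.mul_smul, Matrix.smul_mul, Matrix.mul_one, hUu']
    have h2 : ((k : ℂ) / (d : ℂ)) = (((k:ℝ)/d : ℝ) : ℂ) := by push_cast; ring
    have h3 : ∑ j, (M j) i i = (((k:ℝ)/d : ℝ) : ℂ) := by
      have := congrArg (fun A => A i i) hMsum
      simp only [Matrix.sum_apply, Matrix.smul_apply, Matrix.one_apply_eq, smul_eq_mul,
        mul_one] at this
      rw [this, h2]
    have h4 := congrArg Complex.re h3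
    rw [Complex.re_sum] at h4
    simpa [hc] using h4
  -- sums of q
  set q : Fin k → ℝ := fun j => ∑ i, c j i * lam i with hqdef
  have hqsum : ∑ j, q j = (k:ℝ)/d := by
    have : ∑ j, q j = ∑ i, (∑ j, c j i) * lam i := by
      rw [Finset.sum_comm]
      simp [hqdef, Finset.sum_mul]
    rw [this]
    have hlamsum : ∑ i, lam i = 1 := by
      have h : ρ.trace = ∑ i, (lam i : ℂ) := by
        conv_lhs => rw [hspec]
        rw [Matrix.trace_mul_comm, ← Matrix.mul_assoc, hUu', Matrix.one_mul,
          Matrix.trace_diagonal]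
      rw [hρtr] at h
      exact_mod_cast h.symm
    calc ∑ i, (∑ j, c j i) * lam i = ∑ i, ((k:ℝ)/d) * lam i := by
          exact Finset.sum_congr rfl fun i _ => by rw [hck i]
      _ = (k:ℝ)/d := by rw [← Finset.mul_sum, hlamsum, mul_one]
  have hlam0 : ∀ i, 0 ≤ lam i := fun i => hρ.eigenvalues_nonneg i
  -- Jensen
  have hjensen : ∀ j, ∑ i, c j i * Real.negMulLog (lam i) ≤ Real.negMulLog (q j) := by
    intro j
    have := Real.concaveOn_negMulLog.le_map_sum (t := Finset.univ)
      (fun i _ => hc0 j i) (hc1 j) (fun i _ => hlam0 i)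
    simpa [smul_eq_mul, hqdef] using this
  have hsum1 : ∑ i, Real.negMulLog (lam i) ≤ ((d:ℝ)/k) * ∑ j, Real.negMulLog (q j) := by
    have h1 : ∑ j, ∑ i, c j i * Real.negMulLog (lam i) ≤ ∑ j, Real.negMulLog (q j) :=
      Finset.sum_le_sum fun j _ => hjensen j
    have h2 : ∑ j, ∑ i, c j i * Real.negMulLog (lam i)
        = ((k:ℝ)/d) * ∑ i, Real.negMulLog (lam i) := by
      rw [Finset.sum_comm, Finset.mul_sum]
      refine Finset.sum_congr rfl fun i _ => ?_
      rw [← Finset.sum_mul, hck i]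
    rw [h2] at h1
    calc ∑ i, Real.negMulLog (lam i)
        = ((d:ℝ)/k) * (((k:ℝ)/d) * ∑ i, Real.negMulLog (lam i)) := by field_simp
      _ ≤ ((d:ℝ)/k) * ∑ j, Real.negMulLog (q j) :=
          mul_le_mul_of_nonneg_left h1 (by positivity)
  -- RHS rewrite
  have hrhs : ∑ j, Real.negMulLog (((d : ℝ) / k) * ((σ j * ρ).trace).re)
      = Real.log ((k:ℝ)/d) + ((d:ℝ)/k) * ∑ j, Real.negMulLog (q j) := by
    have : ∀ j, Real.negMulLog (((d : ℝ) / k) * ((σ j * ρ).trace).re)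
        = q j * Real.negMulLog ((d:ℝ)/k) + ((d:ℝ)/k) * Real.negMulLog (q j) := by
      intro j
      rw [hq j, Real.negMulLog_mul]
    rw [Finset.sum_congr rfl fun j _ => this j, Finset.sum_add_distrib, ← Finset.sum_mul,
      hqsum, ← Finset.mul_sum]
    congr 1
    rw [Real.negMulLog]
    have : Real.log ((d:ℝ)/k) = - Real.log ((k:ℝ)/d) := by
      rw [← Real.log_inv]; congr 1; field_simp
    rw [this]
    field_simp
  rw [hrhs]
  linarith [hsum1]
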